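/- arXiv:1906.11658 — 3 statements merged into one kernel-verified Lean document; each statement's English description precedes it below -/
import Mathlib

section
/- Let w ∈ ℝ^p be a nonnegative weight vector and let x_1,...,x_n ∈ {0,1}^p be covariate vectors with instrument assignments z_1,...,z_n ∈ {0,1}. Fix a unit i with z_i = 1 and suppose θ* ∈ {0,1}^p maximizes θᵀw over all θ ∈ {0,1}^p subject to the constraint that there exists k with z_k = 0 and x_k ∘ θ = x_i ∘ θ (where ∘ is the coordinatewise product). Then for any unit k with z_k = 0 and x_k ∘ θ* = x_i ∘ θ*, the unit k minimizes the weighted Hamming distance wᵀ 1[x_i ≠ x_l] over all units l with z_l = 0, where 1[x_i ≠ x_l] denotes the binary vector whose j-th entry is 1 iff x_{ij} ≠ x_{lj}. -/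
/-- AME-IV optimality implies the matched unit minimizes the weighted
Hamming distance among units with opposite instrument. -/
theorem stmt0 {n p : ℕ} (x : Fin n → Fin p → Bool) (z : Fin n → Bool)
    (w : Fin p → ℝ) (hw : ∀ j, 0 ≤ w j) (i : Fin n) (hi : z i = true)
    (θs : Fin p → Bool)
    (hfeas : ∃ k, z k = false ∧ ∀ j, θs j = true → x k j = x i j)
    (hopt : ∀ θ : Fin p → Bool,
      (∃ k, z k = false ∧ ∀ j, θ j = true → x k j = x i j) →
      (∑ j, if θ j = true then w j else 0) ≤ ∑ j, if θs j = true then w j else 0)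
    (k : Fin n) (hk : z k = false)
    (hmatch : ∀ j, θs j = true → x k j = x i j) :
    ∀ l : Fin n, z l = false →
      (∑ j, if x i j ≠ x k j then w j else 0) ≤
        ∑ j, if x i j ≠ x l j then w j else 0 := by
  intro l hl
  have hoptl := hopt (fun j => x l j == x i j) ⟨l, hl, fun j hj => eq_of_beq hj⟩
  have h1 : (∑ j, if x i j ≠ x k j then w j else 0) +
      (∑ j, if θs j = true then w j else 0) ≤ ∑ j, w j := by
    rw [← Finset.sum_add_distrib]
    apply Finset.sum_le_sum
    intro j _
    by_cases hs : θs j = true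
    · have := hmatch j hs
      simp [hs, this]
    · simp only [hs, if_neg, if_false, add_zero]
      split <;> simp [hw j]
  have h2 : (∑ j, w j) = (∑ j, if x i j ≠ x l j then w j else 0) +
      (∑ j, if (x l j == x i j) = true then w j else 0) := by
    rw [← Finset.sum_add_distrib]
    apply Finset.sum_congr rfl
    intro j _
    by_cases h : x i j = x l j
    · have hb : (x l j == x i j) = true := by simp [h]
      simp [h, hb]
    · have hb : (x l j == x i j) = false := by
        simp only [beq_eq_false_iff_ne, ne_eq]
        exact fun e => h e.symm
      simp [h, hb]
  linarith
end

section
/- Let units i = 1,...,n have potential treatments t_i(0), t_i(1) ∈ {0,1} satisfying monotonicity t_i(1) ≥ t_i(0), and potential outcomes y_i(0), y_i(1) ∈ ℝ. Suppose the exclusion restriction holds so that the observed outcome under instrument z is y_i(t_i(z)). Let n_c = #{i : t_i(1) > t_i(0)} and suppose n_c > 0. Then the local average treatment effect λ = (1/n_c) Σ_{i : t_i(1) > t_i(0)} (y_i(1) − y_i(0)) equals the ratio [Σ_{i=1}^n (y_i(t_i(1)) − y_i(t_i(0)))] / [Σ_{i=1}^n (t_i(1) − t_i(0))]. -/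
open Finset in
/-- The LATE on compliers equals the ratio of the average instrument effect
on outcomes to the average instrument effect on treatment. -/
theorem stmt5 {n : ℕ} (t : Fin n → Bool → Bool) (y : Fin n → Bool → ℝ)
    (hmono : ∀ i, t i false = true → t i true = true)
    (hc : 0 < ((Finset.univ : Finset (Fin n)).filter fun i =>
      t i true = true ∧ t i false = false).card) :
    (1 / (((Finset.univ : Finset (Fin n)).filter fun i =>
        t i true = true ∧ t i false = false).card : ℝ)) *
      ∑ i ∈ (Finset.univ.filter fun i => t i true = true ∧ t i false = false),
        (y i true - y i false) =
    (∑ i, (y i (t i true) - y i (t i false))) /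
      (∑ i, ((if t i true then (1:ℝ) else 0) - (if t i false then (1:ℝ) else 0))) := by
  set C := (Finset.univ : Finset (Fin n)).filter fun i =>
      t i true = true ∧ t i false = false with hC
  have hden : (∑ i, ((if t i true then (1:ℝ) else 0) - (if t i false then (1:ℝ) else 0)))
      = (C.card : ℝ) := by
    rw [Finset.card_filter, Nat.cast_sum]
    apply Finset.sum_congr rfl
    intro i _
    rcases Bool.eq_false_or_eq_true (t i true) with h1 | h1 <;>
      rcases Bool.eq_false_or_eq_true (t i false) with h2 | h2 <;>
      simp [h1, h2]
    exact absurd (hmono i h2) (by simp [h1])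
  have hnum : (∑ i, (y i (t i true) - y i (t i false)))
      = ∑ i ∈ C, (y i true - y i false) := by
    rw [hC, Finset.sum_filter]
    apply Finset.sum_congr rfl
    intro i _
    rcases Bool.eq_false_or_eq_true (t i true) with h1 | h1 <;>
      rcases Bool.eq_false_or_eq_true (t i false) with h2 | h2 <;>
      simp [h1, h2]
    exact absurd (hmono i h2) (by simp [h1])
  rw [hnum, hden]; ring
end

section
/- With the notation of the LATE decomposition, partition the units by their covariate value x ∈ X (finite set), letting n_x = #{i : x_i = x}, ω_x = n_x/n, ITT_{y,x} = (1/n_x) Σ_{i : x_i = x} (y_i(t_i(1)) − y_i(t_i(0))), and ITT_{t,x} = (1/n_x) Σ_{i : x_i = x} (t_i(1) − t_i(0)). If Σ_x ω_x ITT_{t,x} ≠ 0, then λ = (Σ_x ω_x ITT_{y,x}) / (Σ_x ω_x ITT_{t,x}), where λ = (1/n_c) Σ_{i : t_i(1) > t_i(0)} (y_i(1) − y_i(0)) and n_c = #{i : t_i(1) > t_i(0)}. -/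
open Finset in
lemma strat_sum {n : ℕ} {X : Type*} [Fintype X] [DecidableEq X]
    (x : Fin n → X) (f : Fin n → ℝ) :
    (∑ v : X, ((Finset.univ.filter fun i => x i = v).card / (n:ℝ)) *
      ((1 / ((Finset.univ.filter fun i => x i = v).card : ℝ)) *
        ∑ i ∈ Finset.univ.filter fun i => x i = v, f i)) =
    (1 / (n:ℝ)) * ∑ i, f i := by
  rw [← Finset.sum_fiberwise (g := x) (f := f), Finset.mul_sum]
  refine Finset.sum_congr rfl fun v _ => ?_
  rcases Nat.eq_zero_or_pos (Finset.univ.filter fun i => x i = v).card with h | h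
  · rw [Finset.card_eq_zero] at h
    simp [h]
  · have hc : ((Finset.univ.filter fun i => x i = v).card : ℝ) ≠ 0 := by positivity
    field_simp

open Finset in
/-- Covariate-stratified decomposition of the LATE: the LATE equals the ratio
of ω-weighted stratum ITT effects on outcome and treatment. -/
theorem stmt6 {n : ℕ} {X : Type*} [Fintype X] [DecidableEq X]
    (x : Fin n → X) (t : Fin n → Bool → Bool) (y : Fin n → Bool → ℝ)
    (hmono : ∀ i, t i false = true → t i true = true)
    (hn : 0 < n)
    (hden : (∑ v : X, ((Finset.univ.filter fun i => x i = v).card / (n:ℝ)) *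
      ((1 / ((Finset.univ.filter fun i => x i = v).card : ℝ)) *
        ∑ i ∈ Finset.univ.filter fun i => x i = v,
          ((if t i true then (1:ℝ) else 0) - (if t i false then (1:ℝ) else 0)))) ≠ 0) :
    (1 / (((Finset.univ : Finset (Fin n)).filter fun i =>
        t i true = true ∧ t i false = false).card : ℝ)) *
      ∑ i ∈ (Finset.univ.filter fun i => t i true = true ∧ t i false = false),
        (y i true - y i false) =
    (∑ v : X, ((Finset.univ.filter fun i => x i = v).card / (n:ℝ)) *
      ((1 / ((Finset.univ.filter fun i => x i = v).card : ℝ)) *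
        ∑ i ∈ Finset.univ.filter fun i => x i = v,
          (y i (t i true) - y i (t i false)))) /
    (∑ v : X, ((Finset.univ.filter fun i => x i = v).card / (n:ℝ)) *
      ((1 / ((Finset.univ.filter fun i => x i = v).card : ℝ)) *
        ∑ i ∈ Finset.univ.filter fun i => x i = v,
          ((if t i true then (1:ℝ) else 0) - (if t i false then (1:ℝ) else 0)))) := by
  set S : Finset (Fin n) :=
    (Finset.univ : Finset (Fin n)).filter fun i => t i true = true ∧ t i false = false with hS
  rw [strat_sum, strat_sum] at *
  -- numerator: ∑ i, (y i (t i true) - y i (t i false)) = ∑ i in S, (y i true - y i false)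
  have hnum : (∑ i, (y i (t i true) - y i (t i false))) = ∑ i ∈ S, (y i true - y i false) := by
    rw [← Finset.sum_filter_add_sum_filter_not Finset.univ
      (fun i => t i true = true ∧ t i false = false)]
    have h1 : ∑ i ∈ S, (y i (t i true) - y i (t i false)) = ∑ i ∈ S, (y i true - y i false) := by
      refine Finset.sum_congr rfl fun i hi => ?_
      rw [hS, Finset.mem_filter] at hi
      rw [hi.2.1, hi.2.2]
    have h2 : ∑ i ∈ Finset.univ.filter (fun i => ¬(t i true = true ∧ t i false = false)),
        (y i (t i true) - y i (t i false)) = 0 := by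
      refine Finset.sum_eq_zero fun i hi => ?_
      rw [Finset.mem_filter] at hi
      have : t i true = t i false := by
        have hm := hmono i
        have h2 := hi.2
        cases hft : t i false <;> cases htt : t i true <;> simp_all
      rw [this, sub_self]
    rw [h1, h2, add_zero]
  have hden2 : (∑ i, ((if t i true then (1:ℝ) else 0) - (if t i false then (1:ℝ) else 0)))
      = S.card := by
    rw [hS, Finset.card_filter]
    push_cast
    refine Finset.sum_congr rfl fun i _ => ?_
    cases hft : t i false
    · cases htt : t i true <;> simp [hft, htt]
    · simp [hft, hmono i hft]
  rw [hden2] at hden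
  rw [hnum, hden2]
  have hnn : (n:ℝ) ≠ 0 := by positivity
  have hcard : (S.card : ℝ) ≠ 0 := by
    intro h
    apply hden
    rw [h, mul_zero]
  field_simp
end
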